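/- Let X be a real vector space, Y a real Banach space, and let ε > 0 be a real number. Suppose f : X → Y satisfies f(0) = 0 and ‖D_f(x,y)‖ ≤ ε for all x, y ∈ X. Then there exist a unique quadratic function Q₁ : X → Y, a unique cubic function C : X → Y and a unique quartic function Q₂ : X → Y such that ‖f(x) − Q₁(x) − C(x) − Q₂(x)‖ ≤ (431/420)·ε for all x ∈ X. -/

import Mathlib

set_option maxHeartbeats 4000000
set_option linter.unusedSectionVars false

open Filter Topology

/-- The mixed quadratic-cubic-quartic functional equation (1.5). -/
def MixedEq {X Y : Type*} [AddCommGroup X] [AddCommGroup Y] (f : X → Y) : Prop :=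
  ∀ x y : X, 3 • (f (x + 2 • y) + f (x - 2 • y)) =
    12 • (f (x + y) + f (x - y)) + 4 • f (3 • y) - 18 • f (2 • y) + 36 • f y - 18 • f x

/-- The difference operator D_f. -/
def Dop {X Y : Type*} [AddCommGroup X] [AddCommGroup Y] (f : X → Y) (x y : X) : Y :=
  3 • (f (x + 2 • y) + f (x - 2 • y)) - 12 • (f (x + y) + f (x - y))
    - 4 • f (3 • y) + 18 • f (2 • y) - 36 • f y + 18 • f x

/-- Quadratic functional equation. -/
def IsQuadratic {X Y : Type*} [AddCommGroup X] [AddCommGroup Y] (g : X → Y) : Prop :=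
  ∀ x y : X, g (x + y) + g (x - y) = 2 • g x + 2 • g y

/-- Cubic functional equation. -/
def IsCubic {X Y : Type*} [AddCommGroup X] [AddCommGroup Y] (c : X → Y) : Prop :=
  ∀ x y : X, c (2 • x + y) + c (2 • x - y) = 2 • c (x + y) + 2 • c (x - y) + 12 • c x

/-- Quartic functional equation. -/
def IsQuartic {X Y : Type*} [AddCommGroup X] [AddCommGroup Y] (q : X → Y) : Prop :=
  ∀ x y : X, q (2 • x + y) + q (2 • x - y) = 4 • (q (x + y) + q (x - y)) + 24 • q x - 6 • q y

lemma geom_lim {Y : Type*} [NormedAddCommGroup Y] [CompleteSpace Y]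
    (e : ℕ → Y) (K r : ℝ) (hr : r < 1)
    (hb : ∀ n, ‖e (n+1) - e n‖ ≤ K * r ^ n) :
    ∃ L : Y, Tendsto e atTop (𝓝 L) ∧ ‖e 0 - L‖ ≤ K / (1 - r) := by
  have hd : ∀ n, dist (e n) (e (n+1)) ≤ K * r ^ n := by
    intro n; rw [dist_eq_norm, norm_sub_rev]; exact hb n
  have hc : CauchySeq e := cauchySeq_of_le_geometric r K hr hd
  obtain ⟨L, hL⟩ := cauchySeq_tendsto_of_complete hc
  refine ⟨L, hL, ?_⟩
  have := dist_le_of_le_geometric_of_tendsto₀ r K hr hd hL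
  rwa [dist_eq_norm] at this

lemma Dop_smul_comp {X Y : Type*} [AddCommGroup X] [Module ℝ X]
    [AddCommGroup Y] [Module ℝ Y] (F : X → Y) (c : ℝ) (k : ℕ) (x y : X) :
    Dop (fun z => c • F (k • z)) x y = c • Dop F (k • x) (k • y) := by
  unfold Dop
  beta_reduce
  rw [show k • (x + 2 • y) = k • x + 2 • (k • y) by module,
      show k • (x - 2 • y) = k • x - 2 • (k • y) by module,
      show k • (x + y) = k • x + k • y by module,
      show k • (x - y) = k • x - k • y by module,
      show k • (3 • y) = (3:ℕ) • (k • y) by module,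
      show k • ((2:ℕ) • y) = (2:ℕ) • (k • y) by module]
  module

/-- Core stability limit construction. -/
lemma core {X Y : Type*} [AddCommGroup X] [Module ℝ X]
    [NormedAddCommGroup Y] [NormedSpace ℝ Y] [CompleteSpace Y]
    (φ : X → Y) (K M lam : ℝ) (hlam : 1 < lam) (hφ0 : φ 0 = 0)
    (hrec : ∀ w : X, ‖φ (2 • w) - lam • φ w‖ ≤ K)
    (hD : ∀ a b : X, ‖Dop φ a b‖ ≤ M) :
    ∃ Φ : X → Y, Φ 0 = 0 ∧ (∀ w, ‖φ w - Φ w‖ ≤ K / (lam - 1)) ∧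
      (∀ w, Φ (2 • w) = lam • Φ w) ∧ (∀ a b, Dop Φ a b = 0) := by
  have hl0 : (0:ℝ) < lam := lt_trans one_pos hlam
  have hlne : lam ≠ 0 := ne_of_gt hl0
  have hinv1 : lam⁻¹ < 1 := inv_lt_one_of_one_lt₀ hlam
  have hinv0 : (0:ℝ) ≤ lam⁻¹ := le_of_lt (inv_pos.2 hl0)
  set e : X → ℕ → Y := fun w n => (lam⁻¹) ^ n • φ ((2 ^ n : ℕ) • w) with he
  have hpow2 : ∀ (n : ℕ) (w : X), ((2:ℕ) ^ (n+1)) • w = 2 • (((2:ℕ) ^ n) • w) := by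
    intro n w
    rw [← mul_smul]
    congr 1
    rw [pow_succ]
    ring
  have hseq : ∀ w n, e w (n + 1) = (lam⁻¹) ^ (n+1) • φ (2 • ((2 ^ n : ℕ) • w)) := by
    intro w n
    simp only [he]
    rw [hpow2]
  have hdiff : ∀ w n, ‖e w (n+1) - e w n‖ ≤ (K / lam) * (lam⁻¹) ^ n := by
    intro w n
    have hkey : (lam⁻¹:ℝ)^n = lam⁻¹^(n+1) * lam := by
      rw [pow_succ]
      field_simp
    have : e w (n+1) - e w n
        = (lam⁻¹) ^ (n+1) • (φ (2 • ((2 ^ n : ℕ) • w)) - lam • φ ((2 ^ n : ℕ) • w)) := by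
      rw [hseq, smul_sub]
      simp only [he]
      rw [hkey, mul_smul]
    rw [this, norm_smul]
    have h1 : ‖(lam⁻¹) ^ (n+1)‖ = lam⁻¹ ^ (n+1) := by
      rw [Real.norm_eq_abs, abs_of_nonneg (pow_nonneg hinv0 _)]
    rw [h1, pow_succ]
    calc lam⁻¹ ^ n * lam⁻¹ * ‖φ (2 • ((2 ^ n : ℕ) • w)) - lam • φ ((2 ^ n : ℕ) • w)‖
        ≤ lam⁻¹ ^ n * lam⁻¹ * K := by
          apply mul_le_mul_of_nonneg_left (hrec _)
          positivity
      _ = (K / lam) * (lam⁻¹) ^ n := by rw [div_eq_mul_inv]; ring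
  have hex : ∀ w : X, ∃ L : Y, Tendsto (e w) atTop (𝓝 L) ∧ ‖e w 0 - L‖ ≤ (K/lam) / (1 - lam⁻¹) :=
    fun w => geom_lim (e w) (K/lam) lam⁻¹ hinv1 (hdiff w)
  choose Φ hT hB using hex
  have he0 : ∀ w, e w 0 = φ w := by intro w; simp [he]
  have hbnd : ∀ w, ‖φ w - Φ w‖ ≤ K / (lam - 1) := by
    intro w
    have := hB w
    rw [he0 w] at this
    have heq : (K/lam) / (1 - lam⁻¹) = K / (lam - 1) := by
      field_simp
    rwa [heq] at this
  refine ⟨Φ, ?_, hbnd, ?_, ?_⟩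
  · -- Φ 0 = 0
    have h1 : Tendsto (e 0) atTop (𝓝 (0:Y)) := by
      have : e 0 = fun _ => (0:Y) := by
        funext n; simp [he, hφ0]
      rw [this]; exact tendsto_const_nhds
    exact tendsto_nhds_unique (hT 0) h1
  · -- scaling
    intro w
    have h1 : Tendsto (fun n => e w (n+1)) atTop (𝓝 (Φ w)) :=
      (hT w).comp (tendsto_add_atTop_nat 1)
    have h2 : Tendsto (fun n => lam • e w (n+1)) atTop (𝓝 (lam • Φ w)) :=
      h1.const_smul lam
    have h3 : (fun n => lam • e w (n+1)) = e (2 • w) := by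
      funext n
      rw [hseq]
      simp only [he]
      rw [smul_smul]
      have harg : (2:ℕ) • ((2:ℕ)^n • w) = (2:ℕ)^n • ((2:ℕ) • w) := smul_comm _ _ _
      rw [harg]
      congr 1
      rw [pow_succ]
      field_simp
    rw [h3] at h2
    exact tendsto_nhds_unique (hT (2 • w)) h2
  · -- Dop vanishes
    intro a b
    have hone : ∀ n : ℕ, Dop (fun z => (lam⁻¹) ^ n • φ ((2^n : ℕ) • z)) a b
        = (lam⁻¹) ^ n • Dop φ ((2^n : ℕ) • a) ((2^n : ℕ) • b) :=
      fun n => Dop_smul_comp φ _ _ a b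
    -- Tendsto of Dop of e-sequence to Dop Φ a b
    have hTD : Tendsto (fun n => Dop (fun z => e z n) a b) atTop (𝓝 (Dop Φ a b)) := by
      unfold Dop
      apply Tendsto.add
      apply Tendsto.sub
      apply Tendsto.add
      apply Tendsto.sub
      apply Tendsto.sub
      · exact ((hT _).add (hT _)).const_smul (3:ℕ)
      · exact ((hT _).add (hT _)).const_smul (12:ℕ)
      · exact (hT _).const_smul (4:ℕ)
      · exact (hT _).const_smul (18:ℕ)
      · exact (hT _).const_smul (36:ℕ)
      · exact (hT _).const_smul (18:ℕ)
    have hz : Tendsto (fun n => Dop (fun z => e z n) a b) atTop (𝓝 (0:Y)) := by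
      have hg : Tendsto (fun n : ℕ => M * (lam⁻¹)^n) atTop (𝓝 0) := by
        have := tendsto_pow_atTop_nhds_zero_of_lt_one hinv0 hinv1
        simpa using this.const_mul M
      refine squeeze_zero_norm (fun n => ?_) hg
      have : Dop (fun z => e z n) a b
          = (lam⁻¹) ^ n • Dop φ ((2^n : ℕ) • a) ((2^n : ℕ) • b) := hone n
      rw [this, norm_smul, Real.norm_eq_abs, abs_of_nonneg (pow_nonneg hinv0 _)]
      rw [mul_comm]
      apply mul_le_mul_of_nonneg_right (hD _ _) (pow_nonneg hinv0 _)
    exact tendsto_nhds_unique hTD hz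
lemma Dop_apply {X Y : Type*} [AddCommGroup X] [AddCommGroup Y] (F : X → Y) (x y : X)
    (p q r s : ℤ) :
    Dop F (p • x + q • y) (r • x + s • y) =
      3 • (F ((p+2*r) • x + (q+2*s) • y) + F ((p-2*r) • x + (q-2*s) • y))
      - 12 • (F ((p+r) • x + (q+s) • y) + F ((p-r) • x + (q-s) • y))
      - 4 • F ((3*r) • x + (3*s) • y) + 18 • F ((2*r) • x + (2*s) • y)
      - 36 • F (r • x + s • y) + 18 • F (p • x + q • y) := by
  unfold Dop
  rw [show (p • x + q • y) + 2 • (r • x + s • y) = (p+2*r) • x + (q+2*s) • y by module,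
      show (p • x + q • y) - 2 • (r • x + s • y) = (p-2*r) • x + (q-2*s) • y by module,
      show (p • x + q • y) + (r • x + s • y) = (p+r) • x + (q+s) • y by module,
      show (p • x + q • y) - (r • x + s • y) = (p-r) • x + (q-s) • y by module,
      show (3:ℕ) • (r • x + s • y) = (3*r) • x + (3*s) • y by module,
      show (2:ℕ) • (r • x + s • y) = (2*r) • x + (2*s) • y by module]
lemma quad_combo {X Y : Type*} [AddCommGroup X] [AddCommGroup Y]
    (F : X → Y) (hF0 : F 0 = 0) (x y : X) :
    (432:ℤ) • ((1:ℤ) • F ((1:ℤ) • x + (1:ℤ) • y) + (1:ℤ) • F ((1:ℤ) • x + (-1:ℤ) • y) + ((-2:ℤ)) • F ((1:ℤ) • x + (0:ℤ) • y) + ((-2:ℤ)) • F ((0:ℤ) • x + (1:ℤ) • y)) =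
        ((13:ℤ)) • Dop F ((-2:ℤ) • x + (-2:ℤ) • y) ((-1:ℤ) • x + (-1:ℤ) • y)
        + ((14:ℤ)) • Dop F ((-2:ℤ) • x + (-2:ℤ) • y) ((-1:ℤ) • x + (0:ℤ) • y)
        + ((54:ℤ)) • Dop F ((-2:ℤ) • x + (-2:ℤ) • y) ((0:ℤ) • x + (-1:ℤ) • y)
        + ((-78:ℤ)) • Dop F ((-2:ℤ) • x + (-2:ℤ) • y) ((0:ℤ) • x + (1:ℤ) • y)
        + ((104:ℤ)) • Dop F ((-2:ℤ) • x + (-1:ℤ) • y) ((-1:ℤ) • x + (0:ℤ) • y)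
        + ((-72:ℤ)) • Dop F ((-2:ℤ) • x + (-1:ℤ) • y) ((-1:ℤ) • x + (1:ℤ) • y)
        + ((-96:ℤ)) • Dop F ((-2:ℤ) • x + (-1:ℤ) • y) ((0:ℤ) • x + (-1:ℤ) • y)
        + ((-78:ℤ)) • Dop F ((-2:ℤ) • x + (0:ℤ) • y) ((-1:ℤ) • x + (-1:ℤ) • y)
        + ((90:ℤ)) • Dop F ((-2:ℤ) • x + (0:ℤ) • y) ((-1:ℤ) • x + (0:ℤ) • y)
        + ((-26:ℤ)) • Dop F ((-2:ℤ) • x + (0:ℤ) • y) ((-1:ℤ) • x + (1:ℤ) • y)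
        + ((-380:ℤ)) • Dop F ((-2:ℤ) • x + (0:ℤ) • y) ((0:ℤ) • x + (-1:ℤ) • y)
        + ((-104:ℤ)) • Dop F ((-2:ℤ) • x + (1:ℤ) • y) ((-1:ℤ) • x + (-1:ℤ) • y)
        + ((72:ℤ)) • Dop F ((-2:ℤ) • x + (1:ℤ) • y) ((-1:ℤ) • x + (0:ℤ) • y)
        + ((-14:ℤ)) • Dop F ((-2:ℤ) • x + (2:ℤ) • y) ((-1:ℤ) • x + (0:ℤ) • y)
        + ((1:ℤ)) • Dop F ((-2:ℤ) • x + (2:ℤ) • y) ((-1:ℤ) • x + (1:ℤ) • y)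
        + ((-84:ℤ)) • Dop F ((-1:ℤ) • x + (-2:ℤ) • y) ((-1:ℤ) • x + (0:ℤ) • y)
        + ((-40:ℤ)) • Dop F ((-1:ℤ) • x + (-1:ℤ) • y) ((-1:ℤ) • x + (-1:ℤ) • y)
        + ((104:ℤ)) • Dop F ((-1:ℤ) • x + (-1:ℤ) • y) ((-1:ℤ) • x + (0:ℤ) • y)
        + ((140:ℤ)) • Dop F ((-1:ℤ) • x + (0:ℤ) • y) ((-1:ℤ) • x + (-1:ℤ) • y)
        + ((-288:ℤ)) • Dop F ((-1:ℤ) • x + (0:ℤ) • y) ((-1:ℤ) • x + (0:ℤ) • y)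
        + ((84:ℤ)) • Dop F ((-1:ℤ) • x + (0:ℤ) • y) ((-1:ℤ) • x + (1:ℤ) • y)
        + ((368:ℤ)) • Dop F ((-1:ℤ) • x + (0:ℤ) • y) ((0:ℤ) • x + (-1:ℤ) • y)
        + ((184:ℤ)) • Dop F ((-1:ℤ) • x + (1:ℤ) • y) ((-1:ℤ) • x + (0:ℤ) • y)
        + ((40:ℤ)) • Dop F ((-1:ℤ) • x + (1:ℤ) • y) ((-1:ℤ) • x + (1:ℤ) • y)
        + ((-140:ℤ)) • Dop F ((-1:ℤ) • x + (2:ℤ) • y) ((-1:ℤ) • x + (0:ℤ) • y)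
        + ((-39:ℤ)) • (F ((2*(-2):ℤ) • x + (2*(-2):ℤ) • y) - (4:ℤ) • F ((-2:ℤ) • x + (-2:ℤ) • y))
        + ((192:ℤ)) • (F ((2*(-2):ℤ) • x + (2*(-1):ℤ) • y) - (4:ℤ) • F ((-2:ℤ) • x + (-1:ℤ) • y))
        + ((-270:ℤ)) • (F ((2*(-2):ℤ) • x + (2*(0):ℤ) • y) - (4:ℤ) • F ((-2:ℤ) • x + (0:ℤ) • y))
        + ((120:ℤ)) • (F ((2*(-2):ℤ) • x + (2*(1):ℤ) • y) - (4:ℤ) • F ((-2:ℤ) • x + (1:ℤ) • y))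
        + ((-3:ℤ)) • (F ((2*(-2):ℤ) • x + (2*(2):ℤ) • y) - (4:ℤ) • F ((-2:ℤ) • x + (2:ℤ) • y))
        + ((72:ℤ)) • (F ((2*(-1):ℤ) • x + (2*(-2):ℤ) • y) - (4:ℤ) • F ((-1:ℤ) • x + (-2:ℤ) • y))
        + ((-468:ℤ)) • (F ((2*(-1):ℤ) • x + (2*(-1):ℤ) • y) - (4:ℤ) • F ((-1:ℤ) • x + (-1:ℤ) • y))
        + ((720:ℤ)) • (F ((2*(-1):ℤ) • x + (2*(0):ℤ) • y) - (4:ℤ) • F ((-1:ℤ) • x + (0:ℤ) • y))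
        + ((-324:ℤ)) • (F ((2*(-1):ℤ) • x + (2*(1):ℤ) • y) - (4:ℤ) • F ((-1:ℤ) • x + (1:ℤ) • y)) := by
  simp only [Dop_apply]
  norm_num [hF0]
  abel

lemma cubic_combo {X Y : Type*} [AddCommGroup X] [AddCommGroup Y]
    (F : X → Y) (hF0 : F 0 = 0) (x y : X) :
    (2016:ℤ) • ((1:ℤ) • F ((2:ℤ) • x + (1:ℤ) • y) + (1:ℤ) • F ((2:ℤ) • x + (-1:ℤ) • y) + ((-2:ℤ)) • F ((1:ℤ) • x + (1:ℤ) • y) + ((-2:ℤ)) • F ((1:ℤ) • x + (-1:ℤ) • y) + ((-12:ℤ)) • F ((1:ℤ) • x + (0:ℤ) • y)) =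
        ((147:ℤ)) • Dop F ((-2:ℤ) • x + (-2:ℤ) • y) ((-1:ℤ) • x + (-1:ℤ) • y)
        + ((728:ℤ)) • Dop F ((-2:ℤ) • x + (-2:ℤ) • y) ((-1:ℤ) • x + (0:ℤ) • y)
        + ((1284:ℤ)) • Dop F ((-2:ℤ) • x + (-2:ℤ) • y) ((0:ℤ) • x + (-1:ℤ) • y)
        + ((-1452:ℤ)) • Dop F ((-2:ℤ) • x + (-2:ℤ) • y) ((0:ℤ) • x + (1:ℤ) • y)
        + ((1936:ℤ)) • Dop F ((-2:ℤ) • x + (-1:ℤ) • y) ((-1:ℤ) • x + (0:ℤ) • y)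
        + ((-32:ℤ)) • Dop F ((-2:ℤ) • x + (-1:ℤ) • y) ((-1:ℤ) • x + (1:ℤ) • y)
        + ((-1344:ℤ)) • Dop F ((-2:ℤ) • x + (-1:ℤ) • y) ((0:ℤ) • x + (-1:ℤ) • y)
        + ((-1232:ℤ)) • Dop F ((-2:ℤ) • x + (0:ℤ) • y) ((-1:ℤ) • x + (-1:ℤ) • y)
        + ((630:ℤ)) • Dop F ((-2:ℤ) • x + (0:ℤ) • y) ((-1:ℤ) • x + (0:ℤ) • y)
        + ((392:ℤ)) • Dop F ((-2:ℤ) • x + (0:ℤ) • y) ((-1:ℤ) • x + (1:ℤ) • y)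
        + ((-5316:ℤ)) • Dop F ((-2:ℤ) • x + (0:ℤ) • y) ((0:ℤ) • x + (-1:ℤ) • y)
        + ((-1936:ℤ)) • Dop F ((-2:ℤ) • x + (1:ℤ) • y) ((-1:ℤ) • x + (-1:ℤ) • y)
        + ((32:ℤ)) • Dop F ((-2:ℤ) • x + (1:ℤ) • y) ((-1:ℤ) • x + (0:ℤ) • y)
        + ((-728:ℤ)) • Dop F ((-2:ℤ) • x + (2:ℤ) • y) ((-1:ℤ) • x + (0:ℤ) • y)
        + ((63:ℤ)) • Dop F ((-2:ℤ) • x + (2:ℤ) • y) ((-1:ℤ) • x + (1:ℤ) • y)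
        + ((244:ℤ)) • Dop F ((-1:ℤ) • x + (-2:ℤ) • y) ((-1:ℤ) • x + (0:ℤ) • y)
        + ((-3040:ℤ)) • Dop F ((-1:ℤ) • x + (-1:ℤ) • y) ((-1:ℤ) • x + (-1:ℤ) • y)
        + ((2816:ℤ)) • Dop F ((-1:ℤ) • x + (-1:ℤ) • y) ((-1:ℤ) • x + (0:ℤ) • y)
        + ((2668:ℤ)) • Dop F ((-1:ℤ) • x + (0:ℤ) • y) ((-1:ℤ) • x + (-1:ℤ) • y)
        + ((-5376:ℤ)) • Dop F ((-1:ℤ) • x + (0:ℤ) • y) ((-1:ℤ) • x + (0:ℤ) • y)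
        + ((-244:ℤ)) • Dop F ((-1:ℤ) • x + (0:ℤ) • y) ((-1:ℤ) • x + (1:ℤ) • y)
        + ((5352:ℤ)) • Dop F ((-1:ℤ) • x + (0:ℤ) • y) ((0:ℤ) • x + (-1:ℤ) • y)
        + ((1696:ℤ)) • Dop F ((-1:ℤ) • x + (1:ℤ) • y) ((-1:ℤ) • x + (0:ℤ) • y)
        + ((-1472:ℤ)) • Dop F ((-1:ℤ) • x + (1:ℤ) • y) ((-1:ℤ) • x + (1:ℤ) • y)
        + ((-2668:ℤ)) • Dop F ((-1:ℤ) • x + (2:ℤ) • y) ((-1:ℤ) • x + (0:ℤ) • y)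
        + ((672:ℤ)) • Dop F ((0:ℤ) • x + (-1:ℤ) • y) ((-1:ℤ) • x + (-1:ℤ) • y)
        + ((672:ℤ)) • Dop F ((0:ℤ) • x + (-1:ℤ) • y) ((-1:ℤ) • x + (0:ℤ) • y)
        + ((-441:ℤ)) • (F ((2*(-2):ℤ) • x + (2*(-2):ℤ) • y) - (8:ℤ) • F ((-2:ℤ) • x + (-2:ℤ) • y))
        + ((1512:ℤ)) • (F ((2*(-2):ℤ) • x + (2*(-1):ℤ) • y) - (8:ℤ) • F ((-2:ℤ) • x + (-1:ℤ) • y))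
        + ((-1890:ℤ)) • (F ((2*(-2):ℤ) • x + (2*(0):ℤ) • y) - (8:ℤ) • F ((-2:ℤ) • x + (0:ℤ) • y))
        + ((1008:ℤ)) • (F ((2*(-2):ℤ) • x + (2*(1):ℤ) • y) - (8:ℤ) • F ((-2:ℤ) • x + (1:ℤ) • y))
        + ((-189:ℤ)) • (F ((2*(-2):ℤ) • x + (2*(2):ℤ) • y) - (8:ℤ) • F ((-2:ℤ) • x + (2:ℤ) • y))
        + ((504:ℤ)) • (F ((2*(-1):ℤ) • x + (2*(-2):ℤ) • y) - (8:ℤ) • F ((-1:ℤ) • x + (-2:ℤ) • y))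
        + ((-1008:ℤ)) • (F ((2*(-1):ℤ) • x + (2*(-1):ℤ) • y) - (8:ℤ) • F ((-1:ℤ) • x + (-1:ℤ) • y))
        + ((4536:ℤ)) • (F ((2*(-1):ℤ) • x + (2*(0):ℤ) • y) - (8:ℤ) • F ((-1:ℤ) • x + (0:ℤ) • y)) := by
  simp only [Dop_apply]
  norm_num [hF0]
  abel

lemma quart_combo {X Y : Type*} [AddCommGroup X] [AddCommGroup Y]
    (F : X → Y) (hF0 : F 0 = 0) (x y : X) :
    (1008:ℤ) • ((1:ℤ) • F ((2:ℤ) • x + (1:ℤ) • y) + (1:ℤ) • F ((2:ℤ) • x + (-1:ℤ) • y) + ((-4:ℤ)) • F ((1:ℤ) • x + (1:ℤ) • y) + ((-4:ℤ)) • F ((1:ℤ) • x + (-1:ℤ) • y) + ((-24:ℤ)) • F ((1:ℤ) • x + (0:ℤ) • y) + (6:ℤ) • F ((0:ℤ) • x + (1:ℤ) • y)) =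
        ((42:ℤ)) • Dop F ((-2:ℤ) • x + (-2:ℤ) • y) ((-1:ℤ) • x + (-1:ℤ) • y)
        + ((490:ℤ)) • Dop F ((-2:ℤ) • x + (-2:ℤ) • y) ((-1:ℤ) • x + (0:ℤ) • y)
        + ((471:ℤ)) • Dop F ((-2:ℤ) • x + (-2:ℤ) • y) ((0:ℤ) • x + (-1:ℤ) • y)
        + ((-555:ℤ)) • Dop F ((-2:ℤ) • x + (-2:ℤ) • y) ((0:ℤ) • x + (1:ℤ) • y)
        + ((740:ℤ)) • Dop F ((-2:ℤ) • x + (-1:ℤ) • y) ((-1:ℤ) • x + (0:ℤ) • y)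
        + ((548:ℤ)) • Dop F ((-2:ℤ) • x + (-1:ℤ) • y) ((-1:ℤ) • x + (1:ℤ) • y)
        + ((-672:ℤ)) • Dop F ((-2:ℤ) • x + (-1:ℤ) • y) ((0:ℤ) • x + (-1:ℤ) • y)
        + ((-532:ℤ)) • Dop F ((-2:ℤ) • x + (0:ℤ) • y) ((-1:ℤ) • x + (-1:ℤ) • y)
        + ((294:ℤ)) • Dop F ((-2:ℤ) • x + (0:ℤ) • y) ((-1:ℤ) • x + (0:ℤ) • y)
        + ((532:ℤ)) • Dop F ((-2:ℤ) • x + (0:ℤ) • y) ((-1:ℤ) • x + (1:ℤ) • y)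
        + ((-996:ℤ)) • Dop F ((-2:ℤ) • x + (0:ℤ) • y) ((0:ℤ) • x + (-1:ℤ) • y)
        + ((-740:ℤ)) • Dop F ((-2:ℤ) • x + (1:ℤ) • y) ((-1:ℤ) • x + (-1:ℤ) • y)
        + ((-548:ℤ)) • Dop F ((-2:ℤ) • x + (1:ℤ) • y) ((-1:ℤ) • x + (0:ℤ) • y)
        + ((-490:ℤ)) • Dop F ((-2:ℤ) • x + (2:ℤ) • y) ((-1:ℤ) • x + (0:ℤ) • y)
        + ((872:ℤ)) • Dop F ((-1:ℤ) • x + (-2:ℤ) • y) ((-1:ℤ) • x + (0:ℤ) • y)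
        + ((-1280:ℤ)) • Dop F ((-1:ℤ) • x + (-1:ℤ) • y) ((-1:ℤ) • x + (-1:ℤ) • y)
        + ((832:ℤ)) • Dop F ((-1:ℤ) • x + (-1:ℤ) • y) ((-1:ℤ) • x + (0:ℤ) • y)
        + ((1088:ℤ)) • Dop F ((-1:ℤ) • x + (0:ℤ) • y) ((-1:ℤ) • x + (-1:ℤ) • y)
        + ((-6720:ℤ)) • Dop F ((-1:ℤ) • x + (0:ℤ) • y) ((-1:ℤ) • x + (0:ℤ) • y)
        + ((-872:ℤ)) • Dop F ((-1:ℤ) • x + (0:ℤ) • y) ((-1:ℤ) • x + (1:ℤ) • y)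
        + ((1608:ℤ)) • Dop F ((-1:ℤ) • x + (0:ℤ) • y) ((0:ℤ) • x + (-1:ℤ) • y)
        + ((-64:ℤ)) • Dop F ((-1:ℤ) • x + (1:ℤ) • y) ((-1:ℤ) • x + (0:ℤ) • y)
        + ((-832:ℤ)) • Dop F ((-1:ℤ) • x + (1:ℤ) • y) ((-1:ℤ) • x + (1:ℤ) • y)
        + ((-1088:ℤ)) • Dop F ((-1:ℤ) • x + (2:ℤ) • y) ((-1:ℤ) • x + (0:ℤ) • y)
        + ((336:ℤ)) • Dop F ((0:ℤ) • x + (-1:ℤ) • y) ((-1:ℤ) • x + (-1:ℤ) • y)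
        + ((336:ℤ)) • Dop F ((0:ℤ) • x + (-1:ℤ) • y) ((-1:ℤ) • x + (0:ℤ) • y)
        + ((-126:ℤ)) • (F ((2*(-2):ℤ) • x + (2*(-2):ℤ) • y) - (16:ℤ) • F ((-2:ℤ) • x + (-2:ℤ) • y))
        + ((126:ℤ)) • (F ((2*(-2):ℤ) • x + (2*(-1):ℤ) • y) - (16:ℤ) • F ((-2:ℤ) • x + (-1:ℤ) • y))
        + ((-882:ℤ)) • (F ((2*(-2):ℤ) • x + (2*(0):ℤ) • y) - (16:ℤ) • F ((-2:ℤ) • x + (0:ℤ) • y))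
        + ((-126:ℤ)) • (F ((2*(-2):ℤ) • x + (2*(1):ℤ) • y) - (16:ℤ) • F ((-2:ℤ) • x + (1:ℤ) • y))
        + ((252:ℤ)) • (F ((2*(-1):ℤ) • x + (2*(-2):ℤ) • y) - (16:ℤ) • F ((-1:ℤ) • x + (-2:ℤ) • y))
        + ((-504:ℤ)) • (F ((2*(-1):ℤ) • x + (2*(-1):ℤ) • y) - (16:ℤ) • F ((-1:ℤ) • x + (-1:ℤ) • y))
        + ((6300:ℤ)) • (F ((2*(-1):ℤ) • x + (2*(0):ℤ) • y) - (16:ℤ) • F ((-1:ℤ) • x + (0:ℤ) • y)) := by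
  simp only [Dop_apply]
  norm_num [hF0]
  abel

lemma quad_of_exact {X Y : Type*} [AddCommGroup X] [Module ℝ X]
    [AddCommGroup Y] [Module ℝ Y] [NoZeroSMulDivisors ℝ Y]
    (F : X → Y) (hF0 : F 0 = 0)
    (hsc : ∀ w : X, F ((2:ℕ) • w) = (4:ℝ) • F w)
    (hD : ∀ a b : X, Dop F a b = 0) : IsQuadratic F := by
  intro x y
  have hsc' : ∀ m n : ℤ, F ((2*m:ℤ) • x + (2*n:ℤ) • y) = (4:ℤ) • F ((m:ℤ) • x + (n:ℤ) • y) := by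
    intro m n
    rw [show ((2*m:ℤ)) • x + ((2*n:ℤ)) • y = (2:ℕ) • ((m:ℤ) • x + (n:ℤ) • y) from by module, hsc]
    module
  have key := quad_combo F hF0 x y
  simp only [hD, hsc', sub_self, smul_zero, add_zero, zero_add] at key
  have h2 : ((432:ℤ):ℝ) • ((1:ℤ) • F ((1:ℤ) • x + (1:ℤ) • y) + (1:ℤ) • F ((1:ℤ) • x + (-1:ℤ) • y) + ((-2:ℤ)) • F ((1:ℤ) • x + (0:ℤ) • y) + ((-2:ℤ)) • F ((0:ℤ) • x + (1:ℤ) • y)) = 0 := by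
    rw [Int.cast_smul_eq_zsmul]; exact key
  have h3 : ((1:ℤ) • F ((1:ℤ) • x + (1:ℤ) • y) + (1:ℤ) • F ((1:ℤ) • x + (-1:ℤ) • y) + ((-2:ℤ)) • F ((1:ℤ) • x + (0:ℤ) • y) + ((-2:ℤ)) • F ((0:ℤ) • x + (1:ℤ) • y)) = 0 := by
    rcases smul_eq_zero.mp h2 with h | h
    · norm_num at h
    · exact h
  rw [show (0:ℤ) • x + (1:ℤ) • y = y from by module] at h3
  rw [show (1:ℤ) • x + (-1:ℤ) • y = x - y from by module] at h3
  rw [show (1:ℤ) • x + (0:ℤ) • y = x from by module] at h3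
  rw [show (1:ℤ) • x + (1:ℤ) • y = x + y from by module] at h3
  have h4 : F (x + y) + F (x - y) - (2 • F x + 2 • F y) = 0 := by
    rw [show F (x + y) + F (x - y) - (2 • F x + 2 • F y) = (1:ℤ) • F (x + y) + (1:ℤ) • F (x - y) + ((-2:ℤ)) • F (x) + ((-2:ℤ)) • F (y) from by module]
    exact h3
  have h5 := sub_eq_zero.mp h4
  exact h5

lemma cubic_of_exact {X Y : Type*} [AddCommGroup X] [Module ℝ X]
    [AddCommGroup Y] [Module ℝ Y] [NoZeroSMulDivisors ℝ Y]
    (F : X → Y) (hF0 : F 0 = 0)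
    (hsc : ∀ w : X, F ((2:ℕ) • w) = (8:ℝ) • F w)
    (hD : ∀ a b : X, Dop F a b = 0) : IsCubic F := by
  intro x y
  have hsc' : ∀ m n : ℤ, F ((2*m:ℤ) • x + (2*n:ℤ) • y) = (8:ℤ) • F ((m:ℤ) • x + (n:ℤ) • y) := by
    intro m n
    rw [show ((2*m:ℤ)) • x + ((2*n:ℤ)) • y = (2:ℕ) • ((m:ℤ) • x + (n:ℤ) • y) from by module, hsc]
    module
  have key := cubic_combo F hF0 x y
  simp only [hD, hsc', sub_self, smul_zero, add_zero, zero_add] at key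
  have h2 : ((2016:ℤ):ℝ) • ((1:ℤ) • F ((2:ℤ) • x + (1:ℤ) • y) + (1:ℤ) • F ((2:ℤ) • x + (-1:ℤ) • y) + ((-2:ℤ)) • F ((1:ℤ) • x + (1:ℤ) • y) + ((-2:ℤ)) • F ((1:ℤ) • x + (-1:ℤ) • y) + ((-12:ℤ)) • F ((1:ℤ) • x + (0:ℤ) • y)) = 0 := by
    rw [Int.cast_smul_eq_zsmul]; exact key
  have h3 : ((1:ℤ) • F ((2:ℤ) • x + (1:ℤ) • y) + (1:ℤ) • F ((2:ℤ) • x + (-1:ℤ) • y) + ((-2:ℤ)) • F ((1:ℤ) • x + (1:ℤ) • y) + ((-2:ℤ)) • F ((1:ℤ) • x + (-1:ℤ) • y) + ((-12:ℤ)) • F ((1:ℤ) • x + (0:ℤ) • y)) = 0 := by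
    rcases smul_eq_zero.mp h2 with h | h
    · norm_num at h
    · exact h
  rw [show (1:ℤ) • x + (-1:ℤ) • y = x - y from by module] at h3
  rw [show (1:ℤ) • x + (0:ℤ) • y = x from by module] at h3
  rw [show (1:ℤ) • x + (1:ℤ) • y = x + y from by module] at h3
  rw [show (2:ℤ) • x + (-1:ℤ) • y = 2 • x - y from by module] at h3
  rw [show (2:ℤ) • x + (1:ℤ) • y = 2 • x + y from by module] at h3
  have h4 : F (2 • x + y) + F (2 • x - y) - (2 • F (x + y) + 2 • F (x - y) + 12 • F x) = 0 := by
    rw [show F (2 • x + y) + F (2 • x - y) - (2 • F (x + y) + 2 • F (x - y) + 12 • F x) = (1:ℤ) • F (2 • x + y) + (1:ℤ) • F (2 • x - y) + ((-2:ℤ)) • F (x + y) + ((-2:ℤ)) • F (x - y) + ((-12:ℤ)) • F (x) from by module]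
    exact h3
  have h5 := sub_eq_zero.mp h4
  exact h5

lemma quart_of_exact {X Y : Type*} [AddCommGroup X] [Module ℝ X]
    [AddCommGroup Y] [Module ℝ Y] [NoZeroSMulDivisors ℝ Y]
    (F : X → Y) (hF0 : F 0 = 0)
    (hsc : ∀ w : X, F ((2:ℕ) • w) = (16:ℝ) • F w)
    (hD : ∀ a b : X, Dop F a b = 0) : IsQuartic F := by
  intro x y
  have hsc' : ∀ m n : ℤ, F ((2*m:ℤ) • x + (2*n:ℤ) • y) = (16:ℤ) • F ((m:ℤ) • x + (n:ℤ) • y) := by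
    intro m n
    rw [show ((2*m:ℤ)) • x + ((2*n:ℤ)) • y = (2:ℕ) • ((m:ℤ) • x + (n:ℤ) • y) from by module, hsc]
    module
  have key := quart_combo F hF0 x y
  simp only [hD, hsc', sub_self, smul_zero, add_zero, zero_add] at key
  have h2 : ((1008:ℤ):ℝ) • ((1:ℤ) • F ((2:ℤ) • x + (1:ℤ) • y) + (1:ℤ) • F ((2:ℤ) • x + (-1:ℤ) • y) + ((-4:ℤ)) • F ((1:ℤ) • x + (1:ℤ) • y) + ((-4:ℤ)) • F ((1:ℤ) • x + (-1:ℤ) • y) + ((-24:ℤ)) • F ((1:ℤ) • x + (0:ℤ) • y) + (6:ℤ) • F ((0:ℤ) • x + (1:ℤ) • y)) = 0 := by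
    rw [Int.cast_smul_eq_zsmul]; exact key
  have h3 : ((1:ℤ) • F ((2:ℤ) • x + (1:ℤ) • y) + (1:ℤ) • F ((2:ℤ) • x + (-1:ℤ) • y) + ((-4:ℤ)) • F ((1:ℤ) • x + (1:ℤ) • y) + ((-4:ℤ)) • F ((1:ℤ) • x + (-1:ℤ) • y) + ((-24:ℤ)) • F ((1:ℤ) • x + (0:ℤ) • y) + (6:ℤ) • F ((0:ℤ) • x + (1:ℤ) • y)) = 0 := by
    rcases smul_eq_zero.mp h2 with h | h
    · norm_num at h
    · exact h
  rw [show (0:ℤ) • x + (1:ℤ) • y = y from by module] at h3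
  rw [show (1:ℤ) • x + (-1:ℤ) • y = x - y from by module] at h3
  rw [show (1:ℤ) • x + (0:ℤ) • y = x from by module] at h3
  rw [show (1:ℤ) • x + (1:ℤ) • y = x + y from by module] at h3
  rw [show (2:ℤ) • x + (-1:ℤ) • y = 2 • x - y from by module] at h3
  rw [show (2:ℤ) • x + (1:ℤ) • y = 2 • x + y from by module] at h3
  have h4 : F (2 • x + y) + F (2 • x - y) - (4 • (F (x + y) + F (x - y)) + 24 • F x - 6 • F y) = 0 := by
    rw [show F (2 • x + y) + F (2 • x - y) - (4 • (F (x + y) + F (x - y)) + 24 • F x - 6 • F y) = (1:ℤ) • F (2 • x + y) + (1:ℤ) • F (2 • x - y) + ((-4:ℤ)) • F (x + y) + ((-4:ℤ)) • F (x - y) + ((-24:ℤ)) • F (x) + (6:ℤ) • F (y) from by module]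
    exact h3
  have h5 := sub_eq_zero.mp h4
  exact h5

lemma Dop_apply1 {X Y : Type*} [AddCommGroup X] [AddCommGroup Y] (F : X → Y) (x : X)
    (p r : ℤ) :
    Dop F (p • x) (r • x) =
      3 • (F ((p+2*r) • x) + F ((p-2*r) • x))
      - 12 • (F ((p+r) • x) + F ((p-r) • x))
      - 4 • F ((3*r) • x) + 18 • F ((2*r) • x)
      - 36 • F (r • x) + 18 • F (p • x) := by
  unfold Dop
  rw [show (p • x) + 2 • (r • x) = (p+2*r) • x by module,
      show (p • x) - 2 • (r • x) = (p-2*r) • x by module,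
      show (p • x) + (r • x) = (p+r) • x by module,
      show (p • x) - (r • x) = (p-r) • x by module,
      show (3:ℕ) • (r • x) = (3*r) • x by module,
      show (2:ℕ) • (r • x) = (2*r) • x by module]

lemma t1_combo {X Y : Type*} [AddCommGroup X] [AddCommGroup Y]
    (F : X → Y) (hF0 : F 0 = 0) (x : X) :
    (6:ℤ) • (F ((2:ℤ) • x) - (8:ℤ) • F ((1:ℤ) • x) - F ((-2:ℤ) • x) + (8:ℤ) • F ((-1:ℤ) • x)) =
      (4:ℤ) • Dop F ((1:ℤ) • x) ((1:ℤ) • x) - (4:ℤ) • Dop F ((-1:ℤ) • x) ((-1:ℤ) • x)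
      - Dop F ((0:ℤ) • x) ((1:ℤ) • x) + Dop F ((0:ℤ) • x) ((-1:ℤ) • x) := by
  simp only [Dop_apply1]
  norm_num [hF0]
  abel

lemma t2_combo {X Y : Type*} [AddCommGroup X] [AddCommGroup Y]
    (F : X → Y) (hF0 : F 0 = 0) (x : X) :
    (3:ℤ) • (F ((4:ℤ) • x) - (20:ℤ) • F ((2:ℤ) • x) + (64:ℤ) • F ((1:ℤ) • x)
        + F ((-4:ℤ) • x) - (20:ℤ) • F ((-2:ℤ) • x) + (64:ℤ) • F ((-1:ℤ) • x)) =
      Dop F ((2:ℤ) • x) ((1:ℤ) • x) + Dop F ((-2:ℤ) • x) ((-1:ℤ) • x)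
      - (4:ℤ) • Dop F ((0:ℤ) • x) ((1:ℤ) • x) - (4:ℤ) • Dop F ((0:ℤ) • x) ((-1:ℤ) • x) := by
  simp only [Dop_apply1]
  norm_num [hF0]
  abel

lemma Dop_even_comb {X Y : Type*} [AddCommGroup X] [Module ℝ X]
    [AddCommGroup Y] [Module ℝ Y] (f : X → Y) (c : ℝ) (a b : X) :
    Dop (fun z => c • (f z + f (-z))) a b = c • (Dop f a b + Dop f (-a) (-b)) := by
  unfold Dop
  beta_reduce
  rw [show (-a) + 2 • (-b) = -(a + 2 • b) by module,
      show (-a) - 2 • (-b) = -(a - 2 • b) by module,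
      show (-a) + (-b) = -(a + b) by module,
      show (-a) - (-b) = -(a - b) by module,
      show (3:ℕ) • (-b) = -((3:ℕ) • b) by module,
      show (2:ℕ) • (-b) = -((2:ℕ) • b) by module]
  module

lemma Dop_odd_comb {X Y : Type*} [AddCommGroup X] [Module ℝ X]
    [AddCommGroup Y] [Module ℝ Y] (f : X → Y) (c : ℝ) (a b : X) :
    Dop (fun z => c • (f z - f (-z))) a b = c • (Dop f a b - Dop f (-a) (-b)) := by
  unfold Dop
  beta_reduce
  rw [show (-a) + 2 • (-b) = -(a + 2 • b) by module,
      show (-a) - 2 • (-b) = -(a - 2 • b) by module,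
      show (-a) + (-b) = -(a + b) by module,
      show (-a) - (-b) = -(a - b) by module,
      show (3:ℕ) • (-b) = -((3:ℕ) • b) by module,
      show (2:ℕ) • (-b) = -((2:ℕ) • b) by module]
  module

lemma Dop_sub_comp {X Y : Type*} [AddCommGroup X] [Module ℝ X]
    [AddCommGroup Y] [Module ℝ Y] (F : X → Y) (c : ℝ) (a b : X) :
    Dop (fun z => F ((2:ℕ) • z) - c • F z) a b
      = Dop F ((2:ℕ) • a) ((2:ℕ) • b) - c • Dop F a b := by
  unfold Dop
  beta_reduce
  rw [show (2:ℕ) • (a + 2 • b) = (2:ℕ) • a + 2 • ((2:ℕ) • b) by module,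
      show (2:ℕ) • (a - 2 • b) = (2:ℕ) • a - 2 • ((2:ℕ) • b) by module,
      show (2:ℕ) • (a + b) = (2:ℕ) • a + (2:ℕ) • b by module,
      show (2:ℕ) • (a - b) = (2:ℕ) • a - (2:ℕ) • b by module,
      show (2:ℕ) • ((3:ℕ) • b) = (3:ℕ) • ((2:ℕ) • b) by module,
      show (2:ℕ) • ((2:ℕ) • b) = (2:ℕ) • ((2:ℕ) • b) by rfl]
  module
section props
variable {X Y : Type*} [AddCommGroup X] [Module ℝ X]
    [AddCommGroup Y] [Module ℝ Y] [NoZeroSMulDivisors ℝ Y]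

lemma quad_zero {Q : X → Y} (h : IsQuadratic Q) : Q 0 = 0 := by
  have h0 := h 0 0
  simp only [add_zero, sub_zero] at h0
  have h2 : (2:ℝ) • Q 0 = 0 := by
    have e : (2:ℝ) • Q 0 = (2 • Q 0 + 2 • Q 0) - (Q 0 + Q 0) := by module
    rw [e, ← h0, sub_self]
  rcases smul_eq_zero.mp h2 with h | h
  · norm_num at h
  · exact h

lemma quad_double {Q : X → Y} (h : IsQuadratic Q) (x : X) : Q ((2:ℕ) • x) = (4:ℝ) • Q x := by
  have h1 := h x x
  rw [sub_self, quad_zero h, add_zero, show x + x = (2:ℕ) • x by module] at h1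
  rw [h1]; module

lemma quad_pow {Q : X → Y} (h : IsQuadratic Q) (x : X) (n : ℕ) :
    Q (((2:ℕ) ^ n) • x) = ((4:ℝ) ^ n) • Q x := by
  induction n with
  | zero => simp
  | succ n ih =>
    rw [show ((2:ℕ) ^ (n+1)) • x = (2:ℕ) • (((2:ℕ) ^ n) • x) from by rw [← mul_smul]; congr 1; ring,
        quad_double h, ih, pow_succ]
    module

lemma cubic_double {C : X → Y} (h : IsCubic C) (x : X) : C ((2:ℕ) • x) = (8:ℝ) • C x := by
  have h1 := h x 0
  simp only [add_zero, sub_zero] at h1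
  have h2 : (2:ℝ) • (C ((2:ℕ) • x) - (8:ℝ) • C x) = 0 := by
    have e : (2:ℝ) • (C ((2:ℕ) • x) - (8:ℝ) • C x)
        = (C (2 • x) + C (2 • x)) - (2 • C x + 2 • C x + 12 • C x) := by module
    rw [e, ← h1, sub_self]
  rcases smul_eq_zero.mp h2 with h' | h'
  · norm_num at h'
  · exact sub_eq_zero.mp h'

lemma cubic_pow {C : X → Y} (h : IsCubic C) (x : X) (n : ℕ) :
    C (((2:ℕ) ^ n) • x) = ((8:ℝ) ^ n) • C x := by
  induction n with
  | zero => simp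
  | succ n ih =>
    rw [show ((2:ℕ) ^ (n+1)) • x = (2:ℕ) • (((2:ℕ) ^ n) • x) from by rw [← mul_smul]; congr 1; ring,
        cubic_double h, ih, pow_succ]
    module

lemma quartic_zero {q : X → Y} (h : IsQuartic q) : q 0 = 0 := by
  have h0 := h 0 0
  simp only [add_zero, sub_zero, smul_zero] at h0
  have h2 : (24:ℝ) • q 0 = 0 := by
    have e : (24:ℝ) • q 0 = (4 • (q 0 + q 0) + 24 • q 0 - 6 • q 0) - (q 0 + q 0) := by module
    rw [e, ← h0, sub_self]
  rcases smul_eq_zero.mp h2 with h' | h'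
  · norm_num at h'
  · exact h'

lemma quartic_double {q : X → Y} (h : IsQuartic q) (x : X) :
    q ((2:ℕ) • x) = (16:ℝ) • q x := by
  have h1 := h x 0
  simp only [add_zero, sub_zero] at h1
  rw [quartic_zero h, smul_zero, sub_zero] at h1
  have h2 : (2:ℝ) • (q ((2:ℕ) • x) - (16:ℝ) • q x) = 0 := by
    have e : (2:ℝ) • (q ((2:ℕ) • x) - (16:ℝ) • q x)
        = (q (2 • x) + q (2 • x)) - (4 • (q x + q x) + 24 • q x) := by module
    rw [e, ← h1, sub_self]
  rcases smul_eq_zero.mp h2 with h' | h'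
  · norm_num at h'
  · exact sub_eq_zero.mp h'

lemma quartic_pow {q : X → Y} (h : IsQuartic q) (x : X) (n : ℕ) :
    q (((2:ℕ) ^ n) • x) = ((16:ℝ) ^ n) • q x := by
  induction n with
  | zero => simp
  | succ n ih =>
    rw [show ((2:ℕ) ^ (n+1)) • x = (2:ℕ) • (((2:ℕ) ^ n) • x) from by rw [← mul_smul]; congr 1; ring,
        quartic_double h, ih, pow_succ]
    module

lemma quad_sub {Q Q' : X → Y} (h : IsQuadratic Q) (h' : IsQuadratic Q') :
    IsQuadratic (fun z => Q' z - Q z) := by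
  intro x y
  show (Q' (x+y) - Q (x+y)) + (Q' (x-y) - Q (x-y)) = _
  rw [show (Q' (x+y) - Q (x+y)) + (Q' (x-y) - Q (x-y))
      = (Q' (x+y) + Q' (x-y)) - (Q (x+y) + Q (x-y)) from by abel, h' x y, h x y]
  simp only [smul_sub, smul_add]
  abel

lemma cubic_sub {Q Q' : X → Y} (h : IsCubic Q) (h' : IsCubic Q') :
    IsCubic (fun z => Q' z - Q z) := by
  intro x y
  show (Q' (2 • x + y) - Q (2 • x + y)) + (Q' (2 • x - y) - Q (2 • x - y)) = _
  rw [show (Q' (2 • x + y) - Q (2 • x + y)) + (Q' (2 • x - y) - Q (2 • x - y))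
      = (Q' (2 • x + y) + Q' (2 • x - y)) - (Q (2 • x + y) + Q (2 • x - y)) from by abel,
      h' x y, h x y]
  simp only [smul_sub, smul_add]
  abel

lemma quartic_sub {Q Q' : X → Y} (h : IsQuartic Q) (h' : IsQuartic Q') :
    IsQuartic (fun z => Q' z - Q z) := by
  intro x y
  show (Q' (2 • x + y) - Q (2 • x + y)) + (Q' (2 • x - y) - Q (2 • x - y)) = _
  rw [show (Q' (2 • x + y) - Q (2 • x + y)) + (Q' (2 • x - y) - Q (2 • x - y))
      = (Q' (2 • x + y) + Q' (2 • x - y)) - (Q (2 • x + y) + Q (2 • x - y)) from by abel,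
      h' x y, h x y]
  simp only [smul_sub, smul_add]
  abel

lemma quad_smul {Q : X → Y} (h : IsQuadratic Q) (c : ℝ) :
    IsQuadratic (fun z => c • Q z) := by
  intro x y
  show c • Q (x+y) + c • Q (x-y) = _
  rw [show c • Q (x+y) + c • Q (x-y) = c • (Q (x+y) + Q (x-y)) from by module, h x y]
  module

lemma quartic_smul {Q : X → Y} (h : IsQuartic Q) (c : ℝ) :
    IsQuartic (fun z => c • Q z) := by
  intro x y
  show c • Q (2 • x + y) + c • Q (2 • x - y) = _
  rw [show c • Q (2 • x + y) + c • Q (2 • x - y) = c • (Q (2 • x + y) + Q (2 • x - y)) from by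
        module, h x y]
  module

end props
lemma norm_zsmul_eq {Y : Type*} [NormedAddCommGroup Y] [NormedSpace ℝ Y] (n : ℤ) (v : Y) :
    ‖n • v‖ = |(n:ℝ)| * ‖v‖ := by
  rw [← Int.cast_smul_eq_zsmul ℝ, norm_smul, Real.norm_eq_abs]

lemma vanish3 {Y : Type*} [NormedAddCommGroup Y] [NormedSpace ℝ Y] (M : ℝ) (u v w : Y)
    (hb : ∀ n : ℕ, ‖(4:ℝ)^n • u + (8:ℝ)^n • v + (16:ℝ)^n • w‖ ≤ M) :
    u = 0 ∧ v = 0 ∧ w = 0 := by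
  have hw : w = 0 := by
    have ht : Tendsto (fun n : ℕ => ((4:ℝ)⁻¹)^n • u + ((2:ℝ)⁻¹)^n • v + w)
        atTop (𝓝 (0 + 0 + w)) := by
      refine Tendsto.add (Tendsto.add ?_ ?_) tendsto_const_nhds
      · simpa using (tendsto_pow_atTop_nhds_zero_of_lt_one
          (by norm_num : (0:ℝ) ≤ 4⁻¹) (by norm_num)).smul_const u
      · simpa using (tendsto_pow_atTop_nhds_zero_of_lt_one
          (by norm_num : (0:ℝ) ≤ 2⁻¹) (by norm_num)).smul_const v
    have hz0 : Tendsto (fun n : ℕ => ((4:ℝ)⁻¹)^n • u + ((2:ℝ)⁻¹)^n • v + w) atTop (𝓝 0) := by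
      have hgeo : Tendsto (fun n : ℕ => ((16:ℝ)⁻¹)^n * M) atTop (𝓝 0) := by
        simpa using (tendsto_pow_atTop_nhds_zero_of_lt_one
          (by norm_num : (0:ℝ) ≤ 16⁻¹) (by norm_num)).mul_const M
      refine squeeze_zero_norm (fun n => ?_) hgeo
      have e : ((4:ℝ)⁻¹)^n • u + ((2:ℝ)⁻¹)^n • v + w
          = ((16:ℝ)⁻¹)^n • ((4:ℝ)^n • u + (8:ℝ)^n • v + (16:ℝ)^n • w) := by
        rw [smul_add, smul_add, smul_smul, smul_smul, smul_smul,
            ← mul_pow, ← mul_pow, ← mul_pow]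
        norm_num
      rw [e, norm_smul, Real.norm_eq_abs, abs_of_nonneg (by positivity)]
      exact mul_le_mul_of_nonneg_left (hb n) (by positivity)
    have := tendsto_nhds_unique ht hz0
    simpa using this
  have hb2 : ∀ n : ℕ, ‖(4:ℝ)^n • u + (8:ℝ)^n • v‖ ≤ M := by
    intro n; have := hb n; rwa [hw, smul_zero, add_zero] at this
  have hv : v = 0 := by
    have ht : Tendsto (fun n : ℕ => ((2:ℝ)⁻¹)^n • u + v) atTop (𝓝 (0 + v)) := by
      refine Tendsto.add ?_ tendsto_const_nhds
      simpa using (tendsto_pow_atTop_nhds_zero_of_lt_one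
        (by norm_num : (0:ℝ) ≤ 2⁻¹) (by norm_num)).smul_const u
    have hz0 : Tendsto (fun n : ℕ => ((2:ℝ)⁻¹)^n • u + v) atTop (𝓝 0) := by
      have hgeo : Tendsto (fun n : ℕ => ((8:ℝ)⁻¹)^n * M) atTop (𝓝 0) := by
        simpa using (tendsto_pow_atTop_nhds_zero_of_lt_one
          (by norm_num : (0:ℝ) ≤ 8⁻¹) (by norm_num)).mul_const M
      refine squeeze_zero_norm (fun n => ?_) hgeo
      have e : ((2:ℝ)⁻¹)^n • u + v = ((8:ℝ)⁻¹)^n • ((4:ℝ)^n • u + (8:ℝ)^n • v) := by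
        rw [smul_add, smul_smul, smul_smul, ← mul_pow, ← mul_pow]
        norm_num
      rw [e, norm_smul, Real.norm_eq_abs, abs_of_nonneg (by positivity)]
      exact mul_le_mul_of_nonneg_left (hb2 n) (by positivity)
    have := tendsto_nhds_unique ht hz0
    simpa using this
  have hb3 : ∀ n : ℕ, ‖(4:ℝ)^n • u‖ ≤ M := by
    intro n; have := hb2 n; rwa [hv, smul_zero, add_zero] at this
  have hu : u = 0 := by
    have ht : Tendsto (fun _ : ℕ => u) atTop (𝓝 u) := tendsto_const_nhds
    have hz0 : Tendsto (fun _ : ℕ => u) atTop (𝓝 0) := by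
      have hgeo : Tendsto (fun n : ℕ => ((4:ℝ)⁻¹)^n * M) atTop (𝓝 0) := by
        simpa using (tendsto_pow_atTop_nhds_zero_of_lt_one
          (by norm_num : (0:ℝ) ≤ 4⁻¹) (by norm_num)).mul_const M
      refine squeeze_zero_norm (fun n => ?_) hgeo
      have e : u = ((4:ℝ)⁻¹)^n • ((4:ℝ)^n • u) := by
        rw [smul_smul, ← mul_pow]
        norm_num
      rw [e, norm_smul, Real.norm_eq_abs, abs_of_nonneg (by positivity)]
      exact mul_le_mul_of_nonneg_left (hb3 n) (by positivity)
    exact tendsto_nhds_unique ht hz0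
  exact ⟨hu, hv, hw⟩
theorem stmt_18 {X Y : Type*} [AddCommGroup X] [Module ℝ X]
    [NormedAddCommGroup Y] [NormedSpace ℝ Y] [CompleteSpace Y]
    (ε : ℝ) (hε : 0 < ε)
    (f : X → Y) (hf0 : f 0 = 0)
    (hbd : ∀ x y : X, ‖Dop f x y‖ ≤ ε) :
    ∃ (Q₁ C Q₂ : X → Y),
      IsQuadratic Q₁ ∧ IsCubic C ∧ IsQuartic Q₂ ∧
      (∀ x : X, ‖f x - Q₁ x - C x - Q₂ x‖ ≤ (431 / 420) * ε) ∧
      (∀ Q₁' C' Q₂' : X → Y, IsQuadratic Q₁' → IsCubic C' → IsQuartic Q₂' →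
        (∀ x : X, ‖f x - Q₁' x - C' x - Q₂' x‖ ≤ (431 / 420) * ε) →
        Q₁' = Q₁ ∧ C' = C ∧ Q₂' = Q₂) := by
  classical
  set fe : X → Y := fun z => (2⁻¹:ℝ) • (f z + f (-z)) with hfe
  set fo : X → Y := fun z => (2⁻¹:ℝ) • (f z - f (-z)) with hfo
  have fe0 : fe 0 = 0 := by simp [hfe, hf0]
  have fo0 : fo 0 = 0 := by simp [hfo, hf0]
  have fe_even : ∀ z, fe (-z) = fe z := by
    intro z; simp only [hfe, neg_neg]; rw [add_comm]
  have fo_odd : ∀ z, fo (-z) = -fo z := by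
    intro z; simp only [hfo, neg_neg]; module
  have hDfe : ∀ a b : X, ‖Dop fe a b‖ ≤ ε := by
    intro a b
    have e := Dop_even_comb f (2⁻¹:ℝ) a b
    rw [← hfe] at e
    rw [e, norm_smul, Real.norm_eq_abs]
    have : ‖Dop f a b + Dop f (-a) (-b)‖ ≤ 2 * ε := by
      calc ‖Dop f a b + Dop f (-a) (-b)‖ ≤ ‖Dop f a b‖ + ‖Dop f (-a) (-b)‖ := norm_add_le _ _
        _ ≤ ε + ε := add_le_add (hbd _ _) (hbd _ _)
        _ = 2 * ε := by ring
    rw [abs_of_nonneg (by norm_num : (0:ℝ) ≤ 2⁻¹)]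
    linarith
  have hDfo : ∀ a b : X, ‖Dop fo a b‖ ≤ ε := by
    intro a b
    have e := Dop_odd_comb f (2⁻¹:ℝ) a b
    rw [← hfo] at e
    rw [e, norm_smul, Real.norm_eq_abs]
    have : ‖Dop f a b - Dop f (-a) (-b)‖ ≤ 2 * ε := by
      calc ‖Dop f a b - Dop f (-a) (-b)‖ ≤ ‖Dop f a b‖ + ‖Dop f (-a) (-b)‖ := norm_sub_le _ _
        _ ≤ ε + ε := add_le_add (hbd _ _) (hbd _ _)
        _ = 2 * ε := by ring
    rw [abs_of_nonneg (by norm_num : (0:ℝ) ≤ 2⁻¹)]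
    linarith
  set gg : X → Y := fun z => fe ((2:ℕ) • z) - (16:ℝ) • fe z with hgg
  set hh : X → Y := fun z => fe ((2:ℕ) • z) - (4:ℝ) • fe z with hhh
  have gg0 : gg 0 = 0 := by simp [hgg, fe0]
  have hh0 : hh 0 = 0 := by simp [hhh, fe0]
  have hDgg : ∀ a b : X, ‖Dop gg a b‖ ≤ 17 * ε := by
    intro a b
    have e := Dop_sub_comp fe (16:ℝ) a b
    rw [← hgg] at e
    rw [e]
    calc ‖Dop fe ((2:ℕ) • a) ((2:ℕ) • b) - (16:ℝ) • Dop fe a b‖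
        ≤ ‖Dop fe ((2:ℕ) • a) ((2:ℕ) • b)‖ + ‖(16:ℝ) • Dop fe a b‖ := norm_sub_le _ _
      _ ≤ ε + 16 * ε := by
          refine add_le_add (hDfe _ _) ?_
          rw [norm_smul, Real.norm_eq_abs, abs_of_nonneg (by norm_num : (0:ℝ) ≤ 16)]
          have := hDfe a b
          nlinarith
      _ = 17 * ε := by ring
  have hDhh : ∀ a b : X, ‖Dop hh a b‖ ≤ 5 * ε := by
    intro a b
    have e := Dop_sub_comp fe (4:ℝ) a b
    rw [← hhh] at e
    rw [e]
    calc ‖Dop fe ((2:ℕ) • a) ((2:ℕ) • b) - (4:ℝ) • Dop fe a b‖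
        ≤ ‖Dop fe ((2:ℕ) • a) ((2:ℕ) • b)‖ + ‖(4:ℝ) • Dop fe a b‖ := norm_sub_le _ _
      _ ≤ ε + 4 * ε := by
          refine add_le_add (hDfe _ _) ?_
          rw [norm_smul, Real.norm_eq_abs, abs_of_nonneg (by norm_num : (0:ℝ) ≤ 4)]
          have := hDfe a b
          nlinarith
      _ = 5 * ε := by ring
  -- recursion for fe
  have fe_rec : ∀ w : X, ‖fe ((4:ℕ) • w) - (20:ℝ) • fe ((2:ℕ) • w) + (64:ℝ) • fe w‖
      ≤ 5/3 * ε := by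
    intro w
    have key := t2_combo fe fe0 w
    rw [show ((-4:ℤ)) • w = -((4:ℕ) • w) from by module,
        show ((-2:ℤ)) • w = -((2:ℕ) • w) from by module,
        show ((-1:ℤ)) • w = -w from by module,
        show ((4:ℤ)) • w = (4:ℕ) • w from by module,
        show ((2:ℤ)) • w = (2:ℕ) • w from by module,
        show ((1:ℤ)) • w = w from by module] at key
    simp only [fe_even] at key
    have key2 : (6:ℝ) • (fe ((4:ℕ) • w) - (20:ℝ) • fe ((2:ℕ) • w) + (64:ℝ) • fe w)
        = Dop fe ((2:ℕ) • w) w + Dop fe (-((2:ℕ) • w)) (-w)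
          - (4:ℤ) • Dop fe ((0:ℤ) • w) w - (4:ℤ) • Dop fe ((0:ℤ) • w) (-w) := by
      rw [← key]; module
    have hn : ‖Dop fe ((2:ℕ) • w) w + Dop fe (-((2:ℕ) • w)) (-w)
          - (4:ℤ) • Dop fe ((0:ℤ) • w) w - (4:ℤ) • Dop fe ((0:ℤ) • w) (-w)‖ ≤ 10 * ε := by
      calc ‖Dop fe ((2:ℕ) • w) w + Dop fe (-((2:ℕ) • w)) (-w)
          - (4:ℤ) • Dop fe ((0:ℤ) • w) w - (4:ℤ) • Dop fe ((0:ℤ) • w) (-w)‖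
          ≤ ‖Dop fe ((2:ℕ) • w) w + Dop fe (-((2:ℕ) • w)) (-w)
            - (4:ℤ) • Dop fe ((0:ℤ) • w) w‖ + ‖(4:ℤ) • Dop fe ((0:ℤ) • w) (-w)‖ :=
            norm_sub_le _ _
        _ ≤ (‖Dop fe ((2:ℕ) • w) w + Dop fe (-((2:ℕ) • w)) (-w)‖
            + ‖(4:ℤ) • Dop fe ((0:ℤ) • w) w‖) + ‖(4:ℤ) • Dop fe ((0:ℤ) • w) (-w)‖ := by
            gcongr
            exact norm_sub_le _ _
        _ ≤ ((‖Dop fe ((2:ℕ) • w) w‖ + ‖Dop fe (-((2:ℕ) • w)) (-w)‖)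
            + ‖(4:ℤ) • Dop fe ((0:ℤ) • w) w‖) + ‖(4:ℤ) • Dop fe ((0:ℤ) • w) (-w)‖ := by
            gcongr
            exact norm_add_le _ _
        _ ≤ ((ε + ε) + 4 * ε) + 4 * ε := by
            refine add_le_add (add_le_add (add_le_add (hDfe _ _) (hDfe _ _)) ?_) ?_ <;>
            · rw [norm_zsmul_eq]
              have h1 := hDfe ((0:ℤ) • w) w
              have h2 := hDfe ((0:ℤ) • w) (-w)
              simp only [zero_smul] at h1 h2
              norm_num
              nlinarith
        _ = 10 * ε := by ring
    have : ‖(6:ℝ) • (fe ((4:ℕ) • w) - (20:ℝ) • fe ((2:ℕ) • w) + (64:ℝ) • fe w)‖ ≤ 10 * ε := by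
      rw [key2]; exact hn
    rw [norm_smul, Real.norm_eq_abs, abs_of_nonneg (by norm_num : (0:ℝ) ≤ 6)] at this
    linarith
  -- recursion for fo
  have fo_rec : ∀ w : X, ‖fo ((2:ℕ) • w) - (8:ℝ) • fo w‖ ≤ 5/6 * ε := by
    intro w
    have key := t1_combo fo fo0 w
    rw [show ((-2:ℤ)) • w = -((2:ℕ) • w) from by module,
        show ((-1:ℤ)) • w = -w from by module,
        show ((2:ℤ)) • w = (2:ℕ) • w from by module,
        show ((1:ℤ)) • w = w from by module] at key
    simp only [fo_odd] at key
    have key2 : (12:ℝ) • (fo ((2:ℕ) • w) - (8:ℝ) • fo w)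
        = (4:ℤ) • Dop fo w w - (4:ℤ) • Dop fo (-w) (-w)
          - Dop fo ((0:ℤ) • w) w + Dop fo ((0:ℤ) • w) (-w) := by
      rw [← key]; module
    have hn : ‖(4:ℤ) • Dop fo w w - (4:ℤ) • Dop fo (-w) (-w)
          - Dop fo ((0:ℤ) • w) w + Dop fo ((0:ℤ) • w) (-w)‖ ≤ 10 * ε := by
      calc ‖(4:ℤ) • Dop fo w w - (4:ℤ) • Dop fo (-w) (-w)
          - Dop fo ((0:ℤ) • w) w + Dop fo ((0:ℤ) • w) (-w)‖
          ≤ ‖(4:ℤ) • Dop fo w w - (4:ℤ) • Dop fo (-w) (-w)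
            - Dop fo ((0:ℤ) • w) w‖ + ‖Dop fo ((0:ℤ) • w) (-w)‖ := norm_add_le _ _
        _ ≤ (‖(4:ℤ) • Dop fo w w - (4:ℤ) • Dop fo (-w) (-w)‖
            + ‖Dop fo ((0:ℤ) • w) w‖) + ‖Dop fo ((0:ℤ) • w) (-w)‖ := by
            gcongr; exact norm_sub_le _ _
        _ ≤ ((‖(4:ℤ) • Dop fo w w‖ + ‖(4:ℤ) • Dop fo (-w) (-w)‖)
            + ‖Dop fo ((0:ℤ) • w) w‖) + ‖Dop fo ((0:ℤ) • w) (-w)‖ := by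
            gcongr; exact norm_sub_le _ _
        _ ≤ ((4 * ε + 4 * ε) + ε) + ε := by
            refine add_le_add (add_le_add (add_le_add ?_ ?_) (hDfo _ _)) (hDfo _ _) <;>
            · rw [norm_zsmul_eq]
              have h1 := hDfo w w
              have h2 := hDfo (-w) (-w)
              norm_num
              nlinarith
        _ = 10 * ε := by ring
    have : ‖(12:ℝ) • (fo ((2:ℕ) • w) - (8:ℝ) • fo w)‖ ≤ 10 * ε := by
      rw [key2]; exact hn
    rw [norm_smul, Real.norm_eq_abs, abs_of_nonneg (by norm_num : (0:ℝ) ≤ 12)] at this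
    linarith
  have gg_rec : ∀ w : X, ‖gg (2 • w) - (4:ℝ) • gg w‖ ≤ 5/3 * ε := by
    intro w
    have e : gg (2 • w) - (4:ℝ) • gg w
        = fe ((4:ℕ) • w) - (20:ℝ) • fe ((2:ℕ) • w) + (64:ℝ) • fe w := by
      simp only [hgg]
      rw [show (2:ℕ) • ((2:ℕ) • w) = (4:ℕ) • w from by module]
      module
    rw [e]; exact fe_rec w
  have hh_rec : ∀ w : X, ‖hh (2 • w) - (16:ℝ) • hh w‖ ≤ 5/3 * ε := by
    intro w
    have e : hh (2 • w) - (16:ℝ) • hh w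
        = fe ((4:ℕ) • w) - (20:ℝ) • fe ((2:ℕ) • w) + (64:ℝ) • fe w := by
      simp only [hhh]
      rw [show (2:ℕ) • ((2:ℕ) • w) = (4:ℕ) • w from by module]
      module
    rw [e]; exact fe_rec w
  -- limits
  obtain ⟨CF, hCF0, hCFb, hCFs, hCFD⟩ :=
    core fo (5/6*ε) ε 8 (by norm_num) fo0 (by intro w; exact fo_rec w) hDfo
  obtain ⟨G, hG0, hGb, hGs, hGD⟩ := core gg (5/3*ε) (17*ε) 4 (by norm_num) gg0 gg_rec hDgg
  obtain ⟨H, hH0, hHb, hHs, hHD⟩ := core hh (5/3*ε) (5*ε) 16 (by norm_num) hh0 hh_rec hDhh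
  have hQG : IsQuadratic G := quad_of_exact G hG0 (fun w => hGs w) hGD
  have hCC : IsCubic CF := cubic_of_exact CF hCF0 (fun w => hCFs w) hCFD
  have hQH : IsQuartic H := quart_of_exact H hH0 (fun w => hHs w) hHD
  set Q1 : X → Y := fun z => (-(12:ℝ)⁻¹) • G z with hQ1def
  set Q2 : X → Y := fun z => (12:ℝ)⁻¹ • H z with hQ2def
  have hQ1 : IsQuadratic Q1 := quad_smul hQG _
  have hQ2 : IsQuartic Q2 := quartic_smul hQH _
  have hbound : ∀ x : X, ‖f x - Q1 x - CF x - Q2 x‖ ≤ (431/420) * ε := by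
    intro x
    have hsplit : f x - Q1 x - CF x - Q2 x
        = (12:ℝ)⁻¹ • ((hh x - H x) - (gg x - G x)) + (fo x - CF x) := by
      have hfefo : f x = fe x + fo x := by simp only [hfe, hfo]; module
      have e2 : fe x = (12:ℝ)⁻¹ • (hh x - gg x) := by
        simp only [hgg, hhh]; module
      simp only [hQ1def, hQ2def]
      rw [hfefo, e2]
      module
    rw [hsplit]
    have h1 : ‖(12:ℝ)⁻¹ • ((hh x - H x) - (gg x - G x))‖ ≤ (12:ℝ)⁻¹ * (6/9 * ε) := by
      rw [norm_smul, Real.norm_eq_abs, abs_of_nonneg (by norm_num : (0:ℝ) ≤ 12⁻¹)]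
      have hb1 := hHb x
      have hb2 := hGb x
      have : ‖(hh x - H x) - (gg x - G x)‖ ≤ ‖hh x - H x‖ + ‖gg x - G x‖ := norm_sub_le _ _
      have e1 : (5/3*ε) / (16 - 1) = ε/9 := by ring
      have e2 : (5/3*ε) / (4 - 1) = 5/9*ε := by ring
      rw [e1] at hb1; rw [e2] at hb2
      nlinarith
    have h2 : ‖fo x - CF x‖ ≤ 5/42 * ε := by
      have := hCFb x
      have e : (5/6*ε) / (8 - 1) = 5/42*ε := by ring
      rwa [e] at this
    calc ‖(12:ℝ)⁻¹ • ((hh x - H x) - (gg x - G x)) + (fo x - CF x)‖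
        ≤ ‖(12:ℝ)⁻¹ • ((hh x - H x) - (gg x - G x))‖ + ‖fo x - CF x‖ := norm_add_le _ _
      _ ≤ (12:ℝ)⁻¹ * (6/9 * ε) + 5/42 * ε := add_le_add h1 h2
      _ ≤ (431/420) * ε := by nlinarith
  refine ⟨Q1, CF, Q2, hQ1, hCC, hQ2, hbound, ?_⟩
  intro Q₁' C' Q₂' hQ' hC' hq' hb'
  set D2 : X → Y := fun z => Q₁' z - Q1 z with hD2def
  set D3 : X → Y := fun z => C' z - CF z with hD3def
  set D4 : X → Y := fun z => Q₂' z - Q2 z with hD4def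
  have hD2q : IsQuadratic D2 := quad_sub hQ1 hQ'
  have hD3c : IsCubic D3 := cubic_sub hCC hC'
  have hD4q : IsQuartic D4 := quartic_sub hQ2 hq'
  have hsum : ∀ x : X, ∀ n : ℕ,
      ‖(4:ℝ)^n • D2 x + (8:ℝ)^n • D3 x + (16:ℝ)^n • D4 x‖ ≤ 2 * ((431/420) * ε) := by
    intro x n
    have e : (4:ℝ)^n • D2 x + (8:ℝ)^n • D3 x + (16:ℝ)^n • D4 x
        = (f (((2:ℕ)^n) • x) - Q1 (((2:ℕ)^n) • x) - CF (((2:ℕ)^n) • x) - Q2 (((2:ℕ)^n) • x))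
          - (f (((2:ℕ)^n) • x) - Q₁' (((2:ℕ)^n) • x) - C' (((2:ℕ)^n) • x)
            - Q₂' (((2:ℕ)^n) • x)) := by
      rw [quad_pow hQ1 x n, quad_pow hQ' x n, cubic_pow hCC x n, cubic_pow hC' x n,
          quartic_pow hQ2 x n, quartic_pow hq' x n]
      simp only [hD2def, hD3def, hD4def]
      module
    rw [e]
    calc ‖_ - _‖ ≤ ‖f (((2:ℕ)^n) • x) - Q1 (((2:ℕ)^n) • x) - CF (((2:ℕ)^n) • x)
          - Q2 (((2:ℕ)^n) • x)‖
        + ‖f (((2:ℕ)^n) • x) - Q₁' (((2:ℕ)^n) • x) - C' (((2:ℕ)^n) • x)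
          - Q₂' (((2:ℕ)^n) • x)‖ := norm_sub_le _ _
      _ ≤ 2 * ((431/420) * ε) := by
          have := hbound (((2:ℕ)^n) • x)
          have := hb' (((2:ℕ)^n) • x)
          linarith
  have hzero : ∀ x : X, D2 x = 0 ∧ D3 x = 0 ∧ D4 x = 0 := by
    intro x
    exact vanish3 _ _ _ _ (hsum x)
  refine ⟨funext fun z => ?_, funext fun z => ?_, funext fun z => ?_⟩
  · exact sub_eq_zero.mp (hzero z).1
  · exact sub_eq_zero.mp (hzero z).2.1
  · exact sub_eq_zero.mp (hzero z).2.2
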